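/- Let R ≥ 1, N ≥ 1, let a_1, …, a_N ≥ 2 be integers, and let λ_{m i} ≥ 0 be reals, and fix k ∈ {1,…,R}. Let L(v) = ∑_{m=1}^N ∑_{j=1}^R λ_{m j} v_j^{a_m+1} and G(v)_i = ∑_{m=1}^N λ_{m i} v_i^{a_m} − v_i L(v). Then −e_k is an equilibrium of G, G is differentiable at −e_k, and its derivative at −e_k is the diagonal linear map with entry 2 ∑_{m=1}^N λ_{m k} (−1)^{a_m} in the k-th diagonal position and entry ∑_{m=1}^N λ_{m k} (−1)^{a_m} in every other diagonal position. Consequently, if ∑_{m=1}^N λ_{m k} (−1)^{a_m} < 0 then all eigenvalues of the derivative are negative (−e_k is linearly stable), and if ∑_{m=1}^N λ_{m k} (−1)^{a_m} > 0 then the derivative has a positive eigenvalue (−e_k is linearly unstable). -/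

import Mathlib

open Filter Topology

/-- `-e_k` is an equilibrium of the multi-term loading vector field `G`, with diagonal
derivative whose entries are `2 ∑ₘ λ_{mk} (-1)^{aₘ}` at position `k` and
`∑ₘ λ_{mk} (-1)^{aₘ}` elsewhere; it is linearly stable iff that sum is negative. -/
theorem stmt12 (R N : ℕ) (hR : 1 ≤ R) (hN : 1 ≤ N)
    (a : Fin N → ℕ) (ha : ∀ m, 2 ≤ a m)
    (lam : Fin N → Fin R → ℝ) (hnn : ∀ m i, 0 ≤ lam m i)
    (k : Fin R)
    (G : (Fin R → ℝ) → (Fin R → ℝ))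
    (hG : G = fun v i => (∑ m, lam m i * (v i) ^ (a m))
        - v i * ∑ m, ∑ j, lam m j * (v j) ^ (a m + 1)) :
    G (-Pi.single k 1) = 0 ∧
    HasFDerivAt (𝕜 := ℝ) G
      (ContinuousLinearMap.pi fun i =>
        (if i = k then 2 * ∑ m, lam m k * (-1 : ℝ) ^ (a m)
          else ∑ m, lam m k * (-1 : ℝ) ^ (a m)) • ContinuousLinearMap.proj i)
      (-Pi.single k 1) ∧
    ((∑ m, lam m k * (-1 : ℝ) ^ (a m) < 0 →
      ∀ i : Fin R, (if i = k then 2 * ∑ m, lam m k * (-1 : ℝ) ^ (a m)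
        else ∑ m, lam m k * (-1 : ℝ) ^ (a m)) < 0) ∧
     (0 < ∑ m, lam m k * (-1 : ℝ) ^ (a m) →
      ∃ i : Fin R, 0 < (if i = k then 2 * ∑ m, lam m k * (-1 : ℝ) ^ (a m)
        else ∑ m, lam m k * (-1 : ℝ) ^ (a m)))) := by
  subst hG
  set v₀ : Fin R → ℝ := -Pi.single k 1 with hv₀
  have hv : ∀ j, v₀ j = if j = k then -1 else 0 := by
    intro j
    by_cases h : j = k <;> simp [hv₀, Pi.single_apply, h]
  -- collapse of the inner sums
  have hj1 : ∀ m : Fin N, ∑ j, lam m j * (v₀ j) ^ (a m + 1)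
      = -(lam m k * (-1 : ℝ) ^ (a m)) := by
    intro m
    rw [Finset.sum_eq_single k]
    · rw [hv k, if_pos rfl, pow_succ]; ring
    · intro j _ hj
      rw [hv j, if_neg hj, zero_pow (n := a m + 1) (by omega), mul_zero]
    · simp
  have hm1 : ∀ m : Fin N, ((-1 : ℝ)) ^ (a m - 1) = -(-1 : ℝ) ^ (a m) := by
    intro m
    obtain ⟨b, hb⟩ : ∃ b, a m = b + 1 := ⟨a m - 1, by have := ha m; omega⟩
    rw [hb]; simp [pow_succ]
  -- Part 1 : equilibrium
  have part1 : (fun v i => (∑ m, lam m i * (v i) ^ (a m))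
        - v i * ∑ m, ∑ j, lam m j * (v j) ^ (a m + 1)) v₀ = 0 := by
    funext i
    simp only [Pi.zero_apply]
    rw [Finset.sum_congr rfl (fun m _ => hj1 m)]
    have hz : ∀ m : Fin N, (0 : ℝ) ^ (a m) = 0 :=
      fun m => zero_pow (by have := ha m; omega)
    by_cases hik : i = k
    · subst hik
      rw [hv i, if_pos rfl, Finset.sum_neg_distrib]
      ring
    · rw [hv i, if_neg hik]
      simp [hz]
  refine ⟨part1, ?_, ?_, ?_⟩
  · -- Part 2 : derivative
    apply hasFDerivAt_pi''
    intro i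
    rw [ContinuousLinearMap.proj_pi]
    have hpowd : ∀ (p : ℕ) (j : Fin R), HasFDerivAt (𝕜 := ℝ)
        (fun v : Fin R → ℝ => (v j) ^ p)
        (((p : ℝ) * (v₀ j) ^ (p - 1)) • ContinuousLinearMap.proj j) v₀ :=
      fun p j => (hasDerivAt_pow p (v₀ j)).comp_hasFDerivAt v₀ (hasFDerivAt_apply j v₀)
    have hA : HasFDerivAt (𝕜 := ℝ)
        (fun v : Fin R → ℝ => ∑ m, lam m i * (v i) ^ (a m))
        (∑ m, lam m i • ((((a m : ℝ)) * (v₀ i) ^ (a m - 1)) • ContinuousLinearMap.proj i)) v₀ :=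
      HasFDerivAt.fun_sum fun m _ => (hpowd (a m) i).const_mul (lam m i)
    have hL : HasFDerivAt (𝕜 := ℝ)
        (fun v : Fin R → ℝ => ∑ m, ∑ j, lam m j * (v j) ^ (a m + 1))
        (∑ m, ∑ j, lam m j • ((((a m + 1 : ℕ) : ℝ) * (v₀ j) ^ (a m + 1 - 1)) •
          ContinuousLinearMap.proj j)) v₀ :=
      HasFDerivAt.fun_sum fun m _ => HasFDerivAt.fun_sum fun j _ =>
        (hpowd (a m + 1) j).const_mul (lam m j)
    have hB := (hasFDerivAt_apply (𝕜 := ℝ) i v₀).mul hL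
    have hfi := hA.sub hB
    have heq : (((if i = k then 2 * ∑ m, lam m k * (-1 : ℝ) ^ (a m)
          else ∑ m, lam m k * (-1 : ℝ) ^ (a m)) • ContinuousLinearMap.proj i :
            (Fin R → ℝ) →L[ℝ] ℝ))
        = (∑ m, lam m i • ((((a m : ℝ)) * (v₀ i) ^ (a m - 1)) • ContinuousLinearMap.proj i))
          - (v₀ i • (∑ m, ∑ j, lam m j • ((((a m + 1 : ℕ) : ℝ) * (v₀ j) ^ (a m + 1 - 1)) •
              ContinuousLinearMap.proj j))
            + (∑ m, ∑ j, lam m j * (v₀ j) ^ (a m + 1)) • ContinuousLinearMap.proj i) := by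
      refine ContinuousLinearMap.ext fun w => ?_
      simp only [ContinuousLinearMap.smul_apply, ContinuousLinearMap.sub_apply,
        ContinuousLinearMap.add_apply, ContinuousLinearMap.sum_apply,
        ContinuousLinearMap.proj_apply, smul_eq_mul]
      -- collapse the j-sums
      have hj2 : ∀ m : Fin N,
          ∑ j, lam m j * (((a m + 1 : ℕ) : ℝ) * (v₀ j) ^ (a m + 1 - 1) * w j)
          = lam m k * (((a m : ℝ) + 1) * (-1 : ℝ) ^ (a m) * w k) := by
        intro m
        rw [Finset.sum_eq_single k]
        · rw [hv k, if_pos rfl, Nat.add_sub_cancel]; push_cast; ring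
        · intro j _ hj
          rw [hv j, if_neg hj, Nat.add_sub_cancel, zero_pow (n := a m) (by have := ha m; omega)]
          ring
        · simp
      rw [Finset.sum_congr rfl (fun m _ => hj2 m),
          Finset.sum_congr rfl (fun m _ => hj1 m)]
      have hz1 : ∀ m : Fin N, (0 : ℝ) ^ (a m - 1) = 0 :=
        fun m => zero_pow (by have := ha m; omega)
      by_cases hik : i = k
      · subst hik
        rw [if_pos rfl, hv i, if_pos rfl]
        simp only [hm1]
        simp only [Finset.mul_sum, Finset.sum_mul, ← Finset.sum_neg_distrib,
          ← Finset.sum_add_distrib, ← Finset.sum_sub_distrib]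
        refine Finset.sum_congr rfl fun m _ => ?_
        ring
      · rw [if_neg hik, hv i, if_neg hik]
        simp only [hz1, mul_zero, zero_mul, Finset.sum_const_zero, zero_add, zero_sub]
        simp only [Finset.sum_mul, ← Finset.sum_neg_distrib]
        refine Finset.sum_congr rfl fun m _ => ?_
        ring
    rw [heq]
    exact hfi
  · intro hneg i
    split <;> nlinarith
  · intro hpos
    refine ⟨k, ?_⟩
    rw [if_pos rfl]
    linarith
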